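/- (Recursive identification step, later rows) Let a fully-connected layered feed-forward network of depth L with one source and one sink have activation f(x) = e^x − 1, and let W, W̃ ∈ W_o be weight families whose measured functions satisfy F_W = F_{W̃}. Fix l ∈ {1,…,L−1}, i ∈ N^l with i > 1, and j ∈ N^{l−1}. If w^{l+1}_{1i'} = w̃^{l+1}_{1i'} and w^l_{i'j'} = w̃^l_{i'j'} for all i' < i and all j' ∈ N^{l−1}, and w^l_{ij'} = w̃^l_{ij'} for all j' < j, and w^{l'}_{kk'} = w̃^{l'}_{kk'} for all l' < l and all k, k', then w^l_{ij} = w̃^l_{ij}. -/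

import Mathlib

open Finset Filter

/-- Node outputs of the fully-connected layered feed-forward network with activation
`f x = e^x - 1` and layer sizes `n 0, …, n L`: `expOut n w 0 i x = x` (the source) and
`expOut n w (l+1) i x = exp (∑_{j < n l} w^{l+1}_{ij} · expOut n w l j x) - 1`, where
`w (l+1) i j` is the weight of the edge from node `j` of layer `l` to node `i` of layer
`l + 1` (nodes are numbered `0, …, n l - 1`; the "first" node of a layer is node `0`). -/
noncomputable def expOut (n : ℕ → ℕ) (w : ℕ → ℕ → ℕ → ℝ) : ℕ → ℕ → ℝ → ℝ
  | 0, _, x => x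
  | l + 1, i, x =>
      Real.exp (∑ j ∈ Finset.range (n l), w (l + 1) i j * expOut n w l j x) - 1

/-- The class `W_o` of weight families: all weights are positive and, in each layer and for
each source node `j`, the weights are strictly decreasing in the destination node index
(`w^l_{1j} > w^l_{2j} > … > w^l_{n_l j}` in 1-based notation). -/
def Wo (L : ℕ) (n : ℕ → ℕ) (w : ℕ → ℕ → ℕ → ℝ) : Prop :=
  (∀ l < L, ∀ i < n (l + 1), ∀ j < n l, 0 < w (l + 1) i j) ∧
  (∀ l < L, ∀ j < n l, ∀ i i' : ℕ, i < i' → i' < n (l + 1) → w (l + 1) i' j < w (l + 1) i j)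

lemma dom_exp {f g : ℝ → ℝ} (hfg : Tendsto (fun x => f x - g x) atTop atTop)
    (hg : ∀ᶠ x in atTop, 0 ≤ g x) {t : ℝ} (ht : 0 < t) :
    Tendsto (fun x => (Real.exp (f x) - 1) - t * (Real.exp (g x) - 1)) atTop atTop := by
  have h1 : Tendsto (fun x => Real.exp (f x - g x) - 1) atTop atTop :=
    tendsto_atTop_add_const_right _ (-1) (Real.tendsto_exp_atTop.comp hfg)
  refine tendsto_atTop_mono' atTop ?_ h1
  filter_upwards [hg, hfg.eventually_ge_atTop (Real.log t)] with x hgx hfgx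
  have h2 : t ≤ Real.exp (f x - g x) := by
    rw [← Real.exp_log ht]; exact Real.exp_le_exp.mpr hfgx
  have h3 : (1:ℝ) ≤ Real.exp (g x) := Real.one_le_exp hgx
  have h4 : Real.exp (f x) = Real.exp (g x) * Real.exp (f x - g x) := by
    rw [← Real.exp_add]; ring_nf
  nlinarith [mul_nonneg (sub_nonneg.mpr h3) (sub_nonneg.mpr h2)]

lemma expOut_nonneg {L : ℕ} {n : ℕ → ℕ} {w : ℕ → ℕ → ℕ → ℝ}
    (hw : ∀ l < L, ∀ i < n (l + 1), ∀ j < n l, 0 < w (l + 1) i j) :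
    ∀ m ≤ L, ∀ k < n m, ∀ x : ℝ, 0 ≤ x → 0 ≤ expOut n w m k x := by
  intro m
  induction m with
  | zero => intro _ k _ x hx; simpa [expOut] using hx
  | succ m ih =>
    intro hm k hk x hx
    have hsum : 0 ≤ ∑ j ∈ Finset.range (n m), w (m + 1) k j * expOut n w m j x := by
      refine Finset.sum_nonneg fun j hj => ?_
      have hj' := Finset.mem_range.mp hj
      exact mul_nonneg (hw m (by omega) k hk j hj').le (ih (by omega) j hj' x hx)
    have h1 : (1:ℝ) ≤ Real.exp (∑ j ∈ Finset.range (n m), w (m + 1) k j * expOut n w m j x) :=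
      Real.one_le_exp hsum
    simp only [expOut]
    linarith

lemma expOut_mono {L : ℕ} {n : ℕ → ℕ} {w : ℕ → ℕ → ℕ → ℝ} (hw : Wo L n w) :
    ∀ m, 1 ≤ m → m ≤ L → ∀ k k' : ℕ, k ≤ k' → k' < n m → ∀ x : ℝ, 0 ≤ x →
      expOut n w m k' x ≤ expOut n w m k x := by
  intro m hm1 hmL k k' hkk hk' x hx
  match m, hm1 with
  | m + 1, _ =>
    simp only [expOut]
    have : (∑ j ∈ Finset.range (n m), w (m + 1) k' j * expOut n w m j x)
        ≤ ∑ j ∈ Finset.range (n m), w (m + 1) k j * expOut n w m j x := by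
      refine Finset.sum_le_sum fun j hj => ?_
      have hj' := Finset.mem_range.mp hj
      have hwle : w (m + 1) k' j ≤ w (m + 1) k j := by
        rcases eq_or_lt_of_le hkk with h | h
        · rw [h]
        · exact (hw.2 m (by omega) j hj' k k' h hk').le
      exact mul_le_mul_of_nonneg_right hwle (expOut_nonneg hw.1 m (by omega) j hj' x hx)
    have := Real.exp_le_exp.mpr this
    linarith

lemma expOut_tendsto {L : ℕ} {n : ℕ → ℕ} {w : ℕ → ℕ → ℕ → ℝ}
    (hpos : ∀ l ≤ L, 0 < n l) (hw : Wo L n w) :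
    ∀ m ≤ L, ∀ k < n m, Tendsto (fun x => expOut n w m k x) atTop atTop := by
  intro m
  induction m with
  | zero => intro _ k _; simp only [expOut]; exact tendsto_id
  | succ m ih =>
    intro hm k hk
    have h0 : 0 < n m := hpos m (by omega)
    have hF0 := ih (by omega) 0 h0
    have hc : 0 < w (m + 1) k 0 := hw.1 m (by omega) k hk 0 h0
    have hS : Tendsto (fun x => ∑ j ∈ Finset.range (n m), w (m + 1) k j * expOut n w m j x)
        atTop atTop := by
      refine tendsto_atTop_mono' atTop ?_ (hF0.const_mul_atTop hc)
      filter_upwards [eventually_ge_atTop (0:ℝ)] with x hx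
      refine Finset.single_le_sum (f := fun j => w (m + 1) k j * expOut n w m j x)
        (fun j hj => ?_) (Finset.mem_range.mpr h0)
      have hj' := Finset.mem_range.mp hj
      exact mul_nonneg (hw.1 m (by omega) k hk j hj').le
        (expOut_nonneg hw.1 m (by omega) j hj' x hx)
    have := tendsto_atTop_add_const_right atTop (-1) (Real.tendsto_exp_atTop.comp hS)
    simpa [expOut, sub_eq_add_neg] using this

lemma expOut_congr {n : ℕ → ℕ} {w w' : ℕ → ℕ → ℕ → ℝ} (l : ℕ)
    (h : ∀ l', 1 ≤ l' → l' ≤ l → ∀ k < n l', ∀ k' < n (l' - 1), w l' k k' = w' l' k k') :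
    ∀ m ≤ l, ∀ k < n m, ∀ x, expOut n w m k x = expOut n w' m k x := by
  intro m
  induction m with
  | zero => intro _ k _ x; simp [expOut]
  | succ m ih =>
    intro hm k hk x
    simp only [expOut]
    congr 2
    refine Finset.sum_congr rfl fun j hj => ?_
    have hj' := Finset.mem_range.mp hj
    rw [h (m + 1) (by omega) hm k hk j hj', ih (by omega) j hj' x]

lemma preact_nonneg {L : ℕ} {n : ℕ → ℕ} {w : ℕ → ℕ → ℕ → ℝ}
    (hw : ∀ l < L, ∀ i < n (l + 1), ∀ j < n l, 0 < w (l + 1) i j)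
    (m : ℕ) (hm : m + 1 ≤ L) (i0 : ℕ) (hi0 : i0 < n (m + 1)) (x : ℝ) (hx : 0 ≤ x) :
    0 ≤ ∑ j ∈ Finset.range (n m), w (m + 1) i0 j * expOut n w m j x := by
  refine Finset.sum_nonneg fun j hj => ?_
  have hj' := Finset.mem_range.mp hj
  exact mul_nonneg (hw m (by omega) i0 hi0 j hj').le
    (expOut_nonneg hw m (by omega) j hj' x hx)

/-- Key induction step: if the node `i0` output of layer `m` for `w` dominates the one of
`w'` (by any constant factor), and everything before it agrees, then the node `0` output
of layer `m+1` for `w` dominates the one for `w'`. -/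
lemma dom_step {L : ℕ} {n : ℕ → ℕ} {w w' : ℕ → ℕ → ℕ → ℝ}
    (hpos : ∀ l ≤ L, 0 < n l)
    (hw : Wo L n w) (hw' : Wo L n w')
    (m : ℕ) (hm1 : 1 ≤ m) (hm : m + 1 ≤ L) (i0 : ℕ) (hi0 : i0 < n m)
    (heq : ∀ i' < i0, ∀ x, expOut n w m i' x = expOut n w' m i' x)
    (hwt : ∀ i' < i0, w (m + 1) 0 i' = w' (m + 1) 0 i')
    (hdom : ∀ t, 0 < t → Tendsto (fun x => expOut n w m i0 x - t * expOut n w' m i0 x) atTop atTop) :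
    ∀ t, 0 < t → Tendsto (fun x => expOut n w (m + 1) 0 x - t * expOut n w' (m + 1) 0 x) atTop atTop := by
  intro t ht
  have h0 : 0 < n (m + 1) := hpos (m + 1) hm
  set P : ℝ → ℝ := fun x => ∑ k ∈ Finset.range (n m), w (m + 1) 0 k * expOut n w m k x with hP
  set P' : ℝ → ℝ := fun x => ∑ k ∈ Finset.range (n m), w' (m + 1) 0 k * expOut n w' m k x with hP'
  -- the difference of preactivations
  have hdiff : ∀ x, P x - P' x
      = ∑ k ∈ Finset.Ico i0 (n m), (w (m + 1) 0 k * expOut n w m k x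
          - w' (m + 1) 0 k * expOut n w' m k x) := by
    intro x
    have hsplit : ∑ k ∈ Finset.range (n m), (w (m + 1) 0 k * expOut n w m k x
          - w' (m + 1) 0 k * expOut n w' m k x)
        = ∑ k ∈ Finset.Ico 0 i0, (w (m + 1) 0 k * expOut n w m k x
          - w' (m + 1) 0 k * expOut n w' m k x)
        + ∑ k ∈ Finset.Ico i0 (n m), (w (m + 1) 0 k * expOut n w m k x
          - w' (m + 1) 0 k * expOut n w' m k x) := by
      rw [Finset.range_eq_Ico, Finset.sum_Ico_consecutive _ (Nat.zero_le i0) hi0.le]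
    have hzero : ∑ k ∈ Finset.Ico 0 i0, (w (m + 1) 0 k * expOut n w m k x
          - w' (m + 1) 0 k * expOut n w' m k x) = 0 := by
      refine Finset.sum_eq_zero fun k hk => ?_
      have hk' : k < i0 := (Finset.mem_Ico.mp hk).2
      rw [hwt k hk', heq k hk' x]; ring
    rw [hP, hP', ← Finset.sum_sub_distrib, hsplit, hzero, zero_add]
  -- lower bound the difference
  set c : ℝ := w (m + 1) 0 i0 with hc
  have hcpos : 0 < c := hw.1 m (by omega) 0 h0 i0 hi0
  set C : ℝ := ∑ k ∈ Finset.Ico i0 (n m), w' (m + 1) 0 k with hC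
  have hCpos : 0 < C := by
    refine Finset.sum_pos (fun k hk => ?_) ⟨i0, Finset.mem_Ico.mpr ⟨le_rfl, hi0⟩⟩
    exact hw'.1 m (by omega) 0 h0 k (Finset.mem_Ico.mp hk).2
  have hPP' : Tendsto (fun x => P x - P' x) atTop atTop := by
    have hlow := hdom (C / c) (by positivity)
    have h2 : Tendsto (fun x => c * expOut n w m i0 x - C * expOut n w' m i0 x) atTop atTop := by
      have h3 := hlow.const_mul_atTop hcpos
      have h4 : (fun x => c * (expOut n w m i0 x - C / c * expOut n w' m i0 x))
          = fun x => c * expOut n w m i0 x - C * expOut n w' m i0 x := by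
        funext x; field_simp
      rwa [h4] at h3
    refine tendsto_atTop_mono' atTop ?_ h2
    filter_upwards [eventually_ge_atTop (0:ℝ)] with x hx
    rw [hdiff x]
    have hA : c * expOut n w m i0 x
        ≤ ∑ k ∈ Finset.Ico i0 (n m), w (m + 1) 0 k * expOut n w m k x := by
      refine Finset.single_le_sum (f := fun k => w (m + 1) 0 k * expOut n w m k x)
        (fun k hk => ?_) (Finset.mem_Ico.mpr ⟨le_rfl, hi0⟩)
      have hk' := (Finset.mem_Ico.mp hk).2
      exact mul_nonneg (hw.1 m (by omega) 0 h0 k hk').le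
        (expOut_nonneg hw.1 m (by omega) k hk' x hx)
    have hB : ∑ k ∈ Finset.Ico i0 (n m), w' (m + 1) 0 k * expOut n w' m k x
        ≤ C * expOut n w' m i0 x := by
      rw [hC, Finset.sum_mul]
      refine Finset.sum_le_sum fun k hk => ?_
      obtain ⟨hk1, hk2⟩ := Finset.mem_Ico.mp hk
      exact mul_le_mul_of_nonneg_left
        (expOut_mono hw' m hm1 (by omega) i0 k hk1 hk2 x hx)
        (hw'.1 m (by omega) 0 h0 k hk2).le
    rw [Finset.sum_sub_distrib]
    linarith
  have hP'0 : ∀ᶠ x in atTop, 0 ≤ P' x := by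
    filter_upwards [eventually_ge_atTop (0:ℝ)] with x hx
    exact preact_nonneg hw'.1 m hm 0 h0 x hx
  have := dom_exp hPP' hP'0 ht
  simpa only [expOut] using this

/-- Within one `Wo` family, node `a` of a layer dominates node `b > a` by any constant factor. -/
lemma expOut_dom_succ {L : ℕ} {n : ℕ → ℕ} {w : ℕ → ℕ → ℕ → ℝ}
    (hpos : ∀ l ≤ L, 0 < n l) (hw : Wo L n w)
    (m : ℕ) (hm : m + 1 ≤ L) (a b : ℕ) (hab : a < b) (hb : b < n (m + 1))
    {t : ℝ} (ht : 0 < t) :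
    Tendsto (fun x => expOut n w (m + 1) a x - t * expOut n w (m + 1) b x) atTop atTop := by
  have h0 : 0 < n m := hpos m (by omega)
  set R : ℝ → ℝ := fun x => ∑ j ∈ Finset.range (n m), w (m + 1) a j * expOut n w m j x with hR
  set R' : ℝ → ℝ := fun x => ∑ j ∈ Finset.range (n m), w (m + 1) b j * expOut n w m j x with hR'
  have hRR' : Tendsto (fun x => R x - R' x) atTop atTop := by
    have hc : 0 < w (m + 1) a 0 - w (m + 1) b 0 :=
      sub_pos.mpr (hw.2 m (by omega) 0 h0 a b hab hb)
    have hF0 := expOut_tendsto hpos hw m (by omega) 0 h0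
    refine tendsto_atTop_mono' atTop ?_ (hF0.const_mul_atTop hc)
    filter_upwards [eventually_ge_atTop (0:ℝ)] with x hx
    have : R x - R' x = ∑ j ∈ Finset.range (n m),
        (w (m + 1) a j - w (m + 1) b j) * expOut n w m j x := by
      rw [hR, hR', ← Finset.sum_sub_distrib]
      exact Finset.sum_congr rfl fun j _ => by ring
    rw [this]
    refine Finset.single_le_sum (f := fun j => (w (m + 1) a j - w (m + 1) b j) * expOut n w m j x)
      (fun j hj => ?_) (Finset.mem_range.mpr h0)
    have hj' := Finset.mem_range.mp hj
    exact mul_nonneg (sub_pos.mpr (hw.2 m (by omega) j hj' a b hab hb)).le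
      (expOut_nonneg hw.1 m (by omega) j hj' x hx)
  have hR'0 : ∀ᶠ x in atTop, 0 ≤ R' x := by
    filter_upwards [eventually_ge_atTop (0:ℝ)] with x hx
    exact preact_nonneg hw.1 m hm b hb x hx
  have := dom_exp hRR' hR'0 ht
  simpa only [expOut] using this

lemma key (L : ℕ) (n : ℕ → ℕ) (hn0 : n 0 = 1) (hpos : ∀ l ≤ L, 0 < n l)
    (w w' : ℕ → ℕ → ℕ → ℝ) (hw : Wo L n w) (hw' : Wo L n w')
    (hF : ∀ x : ℝ, expOut n w L 0 x = expOut n w' L 0 x)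
    (lm : ℕ) (hlL : lm + 1 < L)
    (i : ℕ) (hi : i < n (lm + 1)) (j : ℕ) (hj : j < n lm)
    (h1 : ∀ i' < i, w (lm + 2) 0 i' = w' (lm + 2) 0 i')
    (h2 : ∀ i' < i, ∀ j' < n lm, w (lm + 1) i' j' = w' (lm + 1) i' j')
    (h3 : ∀ j' < j, w (lm + 1) i j' = w' (lm + 1) i j')
    (h4 : ∀ l', 1 ≤ l' → l' < lm + 1 → ∀ k < n l', ∀ k' < n (l' - 1), w l' k k' = w' l' k k')
    (hlt : w' (lm + 1) i j < w (lm + 1) i j) : False := by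
  -- lower layers agree
  have eqlow : ∀ m ≤ lm, ∀ k < n m, ∀ x, expOut n w m k x = expOut n w' m k x :=
    expOut_congr lm (fun l' ha hb => h4 l' ha (by omega))
  -- rows before i in layer lm+1 agree
  have eqrow : ∀ i' < i, ∀ x, expOut n w (lm + 1) i' x = expOut n w' (lm + 1) i' x := by
    intro i' hi' x
    simp only [expOut]
    congr 2
    refine Finset.sum_congr rfl fun j' hj' => ?_
    have hj'' := Finset.mem_range.mp hj'
    rw [h2 i' hi' j' hj'', eqlow lm le_rfl j' hj'' x]
  -- the preactivations of node i of layer lm+1, both expressed over the (common) outputs of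
  -- layer lm of the family w
  set Q : ℝ → ℝ := fun x => ∑ j' ∈ Finset.range (n lm), w (lm + 1) i j' * expOut n w lm j' x with hQ
  set Q' : ℝ → ℝ := fun x => ∑ j' ∈ Finset.range (n lm), w' (lm + 1) i j' * expOut n w lm j' x with hQ'
  have hFi : ∀ x, expOut n w (lm + 1) i x = Real.exp (Q x) - 1 := fun x => by simp only [expOut]; rfl
  have hFi' : ∀ x, expOut n w' (lm + 1) i x = Real.exp (Q' x) - 1 := by
    intro x
    simp only [expOut, hQ']
    congr 2
    exact Finset.sum_congr rfl fun j' hj' =>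
      by rw [eqlow lm le_rfl j' (Finset.mem_range.mp hj') x]
  set δ : ℝ := w (lm + 1) i j - w' (lm + 1) i j with hδ
  have hδpos : 0 < δ := sub_pos.mpr hlt
  -- Q - Q' tends to infinity
  have hQQ' : Tendsto (fun x => Q x - Q' x) atTop atTop := by
    have hdiff : ∀ x, Q x - Q' x = δ * expOut n w lm j x
        + ∑ j' ∈ Finset.Ico (j + 1) (n lm),
            (w (lm + 1) i j' - w' (lm + 1) i j') * expOut n w lm j' x := by
      intro x
      have : Q x - Q' x = ∑ j' ∈ Finset.range (n lm),
          (w (lm + 1) i j' - w' (lm + 1) i j') * expOut n w lm j' x := by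
        rw [hQ, hQ', ← Finset.sum_sub_distrib]
        exact Finset.sum_congr rfl fun j' _ => by ring
      rw [this, Finset.range_eq_Ico,
        ← Finset.sum_Ico_consecutive _ (Nat.zero_le j) hj.le,
        Finset.sum_eq_sum_Ico_succ_bot hj]
      have hzero : ∑ j' ∈ Finset.Ico 0 j,
          (w (lm + 1) i j' - w' (lm + 1) i j') * expOut n w lm j' x = 0 := by
        refine Finset.sum_eq_zero fun j' hj' => ?_
        rw [h3 j' (Finset.mem_Ico.mp hj').2]; ring
      rw [hzero, zero_add]
    by_cases hcase : j + 1 < n lm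
    · -- there is a tail; bound it using domination of node j over node j+1 in layer lm
      obtain ⟨lm', rfl⟩ : ∃ lm', lm = lm' + 1 := by
        cases lm with
        | zero => rw [hn0] at hcase; omega
        | succ k => exact ⟨k, rfl⟩
      set C : ℝ := (∑ j' ∈ Finset.Ico (j + 1) (n (lm' + 1)),
          |w (lm' + 2) i j' - w' (lm' + 2) i j'|) + 1 with hC
      have hCpos : 0 < C := by
        have : 0 ≤ ∑ j' ∈ Finset.Ico (j + 1) (n (lm' + 1)),
            |w (lm' + 2) i j' - w' (lm' + 2) i j'| :=
          Finset.sum_nonneg fun _ _ => abs_nonneg _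
        linarith
      have hdomj := expOut_dom_succ hpos hw lm' (by omega) j (j + 1) (Nat.lt_succ_self j) hcase
        (t := C / δ) (by positivity)
      have h2' : Tendsto (fun x => δ * expOut n w (lm' + 1) j x
          - C * expOut n w (lm' + 1) (j + 1) x) atTop atTop := by
        have h3' := hdomj.const_mul_atTop hδpos
        have h4' : (fun x => δ * (expOut n w (lm' + 1) j x
            - C / δ * expOut n w (lm' + 1) (j + 1) x))
            = fun x => δ * expOut n w (lm' + 1) j x - C * expOut n w (lm' + 1) (j + 1) x := by
          funext x; field_simp
        rwa [h4'] at h3'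
      refine tendsto_atTop_mono' atTop ?_ h2'
      filter_upwards [eventually_ge_atTop (0:ℝ)] with x hx
      rw [hdiff x]
      have htail : -(C * expOut n w (lm' + 1) (j + 1) x)
          ≤ ∑ j' ∈ Finset.Ico (j + 1) (n (lm' + 1)),
              (w (lm' + 2) i j' - w' (lm' + 2) i j') * expOut n w (lm' + 1) j' x := by
        have hterm : ∀ j' ∈ Finset.Ico (j + 1) (n (lm' + 1)),
            -(|w (lm' + 2) i j' - w' (lm' + 2) i j'| * expOut n w (lm' + 1) (j + 1) x)
            ≤ (w (lm' + 2) i j' - w' (lm' + 2) i j') * expOut n w (lm' + 1) j' x := by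
          intro j' hj'
          obtain ⟨ha, hb⟩ := Finset.mem_Ico.mp hj'
          have hmono := expOut_mono hw (lm' + 1) (by omega) (by omega) (j + 1) j' ha hb x hx
          have hnn := expOut_nonneg hw.1 (lm' + 1) (by omega) j' hb x hx
          have habs : -|w (lm' + 2) i j' - w' (lm' + 2) i j'|
              ≤ w (lm' + 2) i j' - w' (lm' + 2) i j' := neg_abs_le _
          nlinarith [abs_nonneg (w (lm' + 2) i j' - w' (lm' + 2) i j')]
        have hsum := Finset.sum_le_sum hterm
        have hl : ∑ j' ∈ Finset.Ico (j + 1) (n (lm' + 1)),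
            -(|w (lm' + 2) i j' - w' (lm' + 2) i j'| * expOut n w (lm' + 1) (j + 1) x)
            = -((C - 1) * expOut n w (lm' + 1) (j + 1) x) := by
          rw [hC, add_sub_cancel_right, Finset.sum_mul, ← Finset.sum_neg_distrib]
        have hnn1 := expOut_nonneg hw.1 (lm' + 1) (by omega) (j + 1) hcase x hx
        calc -(C * expOut n w (lm' + 1) (j + 1) x)
            ≤ -((C - 1) * expOut n w (lm' + 1) (j + 1) x) := by nlinarith
          _ ≤ _ := by rw [← hl]; exact hsum
      linarith
    · -- no tail
      have hempty : Finset.Ico (j + 1) (n lm) = ∅ := Finset.Ico_eq_empty (by omega)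
      have h2' : Tendsto (fun x => δ * expOut n w lm j x) atTop atTop :=
        (expOut_tendsto hpos hw lm (by omega) j hj).const_mul_atTop hδpos
      refine tendsto_atTop_mono' atTop ?_ h2'
      filter_upwards with x
      rw [hdiff x, hempty, Finset.sum_empty, add_zero]
  -- node i of layer lm+1 dominates
  have hQ'0 : ∀ᶠ x in atTop, 0 ≤ Q' x := by
    filter_upwards [eventually_ge_atTop (0:ℝ)] with x hx
    rw [hQ']
    refine Finset.sum_nonneg fun j' hj' => ?_
    have hj'' := Finset.mem_range.mp hj'
    exact mul_nonneg (hw'.1 lm (by omega) i hi j' hj'').le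
      (expOut_nonneg hw.1 lm (by omega) j' hj'' x hx)
  have hdomi : ∀ t, 0 < t → Tendsto
      (fun x => expOut n w (lm + 1) i x - t * expOut n w' (lm + 1) i x) atTop atTop := by
    intro t ht
    have := dom_exp hQQ' hQ'0 ht
    refine this.congr fun x => ?_
    rw [hFi x, hFi' x]
  -- propagate to the top
  have main : ∀ d, lm + 2 + d ≤ L → ∀ t, 0 < t → Tendsto
      (fun x => expOut n w (lm + 2 + d) 0 x - t * expOut n w' (lm + 2 + d) 0 x) atTop atTop := by
    intro d
    induction d with
    | zero =>
      intro hd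
      exact dom_step hpos hw hw' (lm + 1) (by omega) hd i hi eqrow h1 hdomi
    | succ d ih =>
      intro hd
      have h0 : 0 < n (lm + 2 + d) := hpos _ (by omega)
      have := dom_step hpos hw hw' (lm + 2 + d) (by omega) (by omega) 0 h0
        (fun i' hi' => absurd hi' (Nat.not_lt_zero i'))
        (fun i' hi' => absurd hi' (Nat.not_lt_zero i'))
        (ih (by omega))
      have harith : lm + 2 + (d + 1) = (lm + 2 + d) + 1 := by omega
      rw [harith]
      exact this
  obtain ⟨d, hd⟩ : ∃ d, lm + 2 + d = L := ⟨L - (lm + 2), by omega⟩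
  have hfinal := main d (by omega) 1 one_pos
  rw [hd] at hfinal
  obtain ⟨x, hx⟩ := (hfinal.eventually_gt_atTop 0).exists
  rw [hF x] at hx
  simp at hx


/-- **(Recursive identification step, later rows, eq. rec_cond2).** Let a fully-connected
layered feed-forward network of depth `L ≥ 1` with one source and one sink have activation
`f x = e^x - 1`, and let `W, W̃ ∈ W_o` have the same measured function. Fix a layer
`l ∈ {1, …, L-1}`, a node `i` of layer `l` with `i > 1` (0-indexed: `0 < i`), and a node `j`
of layer `l - 1`. If the next-layer first-row weights `w^{l+1}_{1 i'}` and the weights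
`w^l_{i' j'}` agree for all `i' < i` and all `j' ∈ N^{l-1}`, the weights `w^l_{i j'}` agree
for all `j' < j`, and all weights of layers `l' < l` agree, then `w^l_{i j} = w̃^l_{i j}`.
(Nodes are 0-indexed, so the first row is `i' = 0`.) -/
theorem stmt_15 (L : ℕ) (hL : 1 ≤ L) (n : ℕ → ℕ) (hn0 : n 0 = 1) (hnL : n L = 1)
    (hpos : ∀ l ≤ L, 0 < n l)
    (w w' : ℕ → ℕ → ℕ → ℝ) (hw : Wo L n w) (hw' : Wo L n w')
    (hF : ∀ x : ℝ, expOut n w L 0 x = expOut n w' L 0 x)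
    (l : ℕ) (hl1 : 1 ≤ l) (hlL : l < L)
    (i : ℕ) (hi0 : 0 < i) (hi : i < n l) (j : ℕ) (hj : j < n (l - 1))
    (h1 : ∀ i' < i, w (l + 1) 0 i' = w' (l + 1) 0 i')
    (h2 : ∀ i' < i, ∀ j' < n (l - 1), w l i' j' = w' l i' j')
    (h3 : ∀ j' < j, w l i j' = w' l i j')
    (h4 : ∀ l', 1 ≤ l' → l' < l → ∀ k < n l', ∀ k' < n (l' - 1),
      w l' k k' = w' l' k k') :
    w l i j = w' l i j := by
  obtain ⟨lm, rfl⟩ : ∃ lm, l = lm + 1 := ⟨l - 1, by omega⟩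
  by_contra hne
  rcases lt_or_gt_of_ne hne with hlt | hlt
  · exact key L n hn0 hpos w' w hw' hw (fun x => (hF x).symm) lm hlL i hi j hj
      (fun i' hi' => (h1 i' hi').symm) (fun i' hi' j' hj' => (h2 i' hi' j' hj').symm)
      (fun j' hj' => (h3 j' hj').symm)
      (fun l' ha hb k hk k' hk' => (h4 l' ha hb k hk k' hk').symm) hlt
  · exact key L n hn0 hpos w w' hw hw' hF lm hlL i hi j hj h1 h2 h3 h4 hlt
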